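/- The functor Cor_{Δ_F} : Δ_F^op → Fin_* preserves inert and active morphisms: if (α,φ) : ([n],g) → ([m],f) is inert in Δ_F then Cor(α,φ) is inert in Fin_*, and if (α,φ) is active then Cor(α,φ) is active. -/

import Mathlib

/-- An object of Barwick's category `Δ_F`: a functor `[m] → F` from a finite linear order to
the skeleton `F` of finite sets, i.e. a chain of finite sets
`f(0) → f(1) → ⋯ → f(m)` (here the set `f(i)` is modelled as `Fin (a i)`). -/
structure DFObj where
  m : ℕ
  a : Fin (m + 1) → ℕ
  t : ∀ i j : Fin (m + 1), i ≤ j → Fin (a i) → Fin (a j)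
  t_id : ∀ (i) (h : i ≤ i) (x), t i i h x = x
  t_comp : ∀ (i j k) (hij : i ≤ j) (hjk : j ≤ k) (x),
    t j k hjk (t i j hij x) = t i k (hij.trans hjk) x

/-- A morphism `(α, φ) : ([n], g) → ([m], f)` in `Δ_F`: a morphism `α : [n] → [m]` in `Δ`
together with a natural transformation `φ : g → f ∘ α` such that each component `φ_k` is
injective and each naturality square is a pullback of finite sets. -/
structure DFHom (X Y : DFObj) where
  α : Fin (X.m + 1) →o Fin (Y.m + 1)
  φ : ∀ k : Fin (X.m + 1), Fin (X.a k) → Fin (Y.a (α k))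
  inj : ∀ k, Function.Injective (φ k)
  nat : ∀ (k l : Fin (X.m + 1)) (h : k ≤ l) (x : Fin (X.a k)),
    φ l (X.t k l h x) = Y.t (α k) (α l) (α.monotone h) (φ k x)
  isPullback : ∀ (k l : Fin (X.m + 1)) (h : k ≤ l) (x : Fin (X.a l))
    (y : Fin (Y.a (α k))), Y.t (α k) (α l) (α.monotone h) y = φ l x →
    ∃! z : Fin (X.a k), X.t k l h z = x ∧ φ k z = y

/-- A morphism in `Δ_F` is inert if the underlying map in `Δ` is an interval inclusion. -/
def DFHom.Inert {X Y : DFObj} (F : DFHom X Y) : Prop :=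
  ∀ i : Fin (X.m + 1), (F.α i : ℕ) = (F.α 0 : ℕ) + (i : ℕ)

/-- A morphism in `Δ_F` is active if the underlying map in `Δ` preserves the endpoints and
the morphism is Cartesian, i.e. `φ` is a natural isomorphism. -/
def DFHom.Active {X Y : DFObj} (F : DFHom X Y) : Prop :=
  F.α 0 = 0 ∧ F.α (Fin.last X.m) = Fin.last Y.m ∧ ∀ k, Function.Bijective (F.φ k)

/-- The functor `Cor_{Δ_F} : Δ_F^op → Fin₊` preserves inert and active morphisms.

Here `Cor` sends `([m], f)` to the pointed finite set `(⨿_{i=1}^m f(i))₊`, modelled as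
`Option ((i : Fin m) × Fin (a i.succ))` with basepoint `none`, and sends `(α, φ)` to the map
`Φ` characterised by: `Φ` preserves the basepoint, and `Φ` sends `x ∈ f(i)` to `y ∈ g(j)`
precisely when `α(j-1) < i ≤ α(j)` and `f^{i, α(j)}(x) = φ_j(y)` (and to the basepoint when
no such `(j, y)` exists).  The conclusion: if `(α, φ)` is inert then every nonbasepoint
fibre of `Φ` is a singleton (`Φ` is inert in `Fin₊`), and if `(α, φ)` is active then only
the basepoint is sent to the basepoint (`Φ` is active in `Fin₊`). -/
private lemma DFObj.t_self (Y : DFObj) {p q : Fin (Y.m + 1)} (h : p = q) (hle : p ≤ q)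
    (x : Fin (Y.a p)) : ((Y.t p q hle x : Fin (Y.a q)) : ℕ) = (x : ℕ) := by
  subst h; rw [Y.t_id]

private lemma exists_step (f : ℕ → ℕ) (h0 : f 0 = 0) :
    ∀ (m v : ℕ), 0 < v → v ≤ f m → ∃ j, j < m ∧ f j < v ∧ v ≤ f (j + 1) := by
  intro m
  induction m with
  | zero => intro v hv hvm; omega
  | succ m ih =>
    intro v hv hvm
    by_cases h : v ≤ f m
    · obtain ⟨j, hj, h1, h2⟩ := ih v hv h
      exact ⟨j, by omega, h1, h2⟩
    · exact ⟨m, by omega, by omega, hvm⟩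

theorem corDF_preserves_inert_active (X Y : DFObj) (F : DFHom X Y)
    (Φ : Option ((i : Fin Y.m) × Fin (Y.a i.succ)) →
      Option ((j : Fin X.m) × Fin (X.a j.succ)))
    (hnone : Φ none = none)
    (hchar : ∀ (i : Fin Y.m) (x : Fin (Y.a i.succ)) (j : Fin X.m) (y : Fin (X.a j.succ)),
      Φ (some ⟨i, x⟩) = some ⟨j, y⟩ ↔
        ∃ h : F.α j.castSucc < i.succ ∧ i.succ ≤ F.α j.succ,
          Y.t i.succ (F.α j.succ) h.2 x = F.φ j.succ y)
    (hbase : ∀ (i : Fin Y.m) (x : Fin (Y.a i.succ)),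
      Φ (some ⟨i, x⟩) = none ↔
        ∀ (j : Fin X.m) (y : Fin (X.a j.succ)),
          ¬ ∃ h : F.α j.castSucc < i.succ ∧ i.succ ≤ F.α j.succ,
            Y.t i.succ (F.α j.succ) h.2 x = F.φ j.succ y) :
    (F.Inert → ∀ b : (j : Fin X.m) × Fin (X.a j.succ), ∃! c, Φ c = some b) ∧
    (F.Active → ∀ c, Φ c = none → c = none) := by
  constructor
  · intro hI b
    obtain ⟨j, y⟩ := b
    have hαs : (F.α j.succ : ℕ) = (F.α 0 : ℕ) + (j : ℕ) + 1 := by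
      have := hI j.succ; simpa [Fin.val_succ, add_assoc] using this
    have hαc : (F.α j.castSucc : ℕ) = (F.α 0 : ℕ) + (j : ℕ) := by
      have := hI j.castSucc; simpa using this
    have hiY : (F.α j.succ : ℕ) - 1 < Y.m := by
      have := (F.α j.succ).isLt; omega
    set i : Fin Y.m := ⟨(F.α j.succ : ℕ) - 1, hiY⟩ with hi
    have hsucc : (i.succ : Fin (Y.m + 1)) = F.α j.succ := by
      apply Fin.ext; simp [hi]; omega
    have hlt : F.α j.castSucc < i.succ := by
      rw [Fin.lt_def]; simp [hi]; omega
    have hle : i.succ ≤ F.α j.succ := hsucc.le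
    have hx : ((F.φ j.succ y : Fin (Y.a (F.α j.succ))) : ℕ) < Y.a i.succ := by
      rw [hsucc]; exact (F.φ j.succ y).isLt
    refine ⟨some ⟨i, ⟨(F.φ j.succ y : ℕ), hx⟩⟩, ?_, ?_⟩
    · exact (hchar i _ j y).mpr ⟨⟨hlt, hle⟩, Fin.ext (Y.t_self hsucc hle _)⟩
    · rintro (_ | ⟨i', x'⟩) hc
      · rw [hnone] at hc; exact absurd hc (by simp)
      · rw [hchar] at hc
        obtain ⟨⟨h1, h2⟩, heq⟩ := hc
        have h1n : (F.α j.castSucc : ℕ) < (i' : ℕ) + 1 := by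
          simpa [Fin.lt_def] using h1
        have h2n : (i' : ℕ) + 1 ≤ (F.α j.succ : ℕ) := by
          simpa [Fin.le_def] using h2
        have hi' : i' = i := by
          apply Fin.ext
          simp only [hi]
          omega
        subst hi'
        have hval : (x' : ℕ) = ((F.φ j.succ y : Fin (Y.a (F.α j.succ))) : ℕ) := by
          rw [← congrArg Fin.val heq, Y.t_self hsucc h2]
        exact congrArg some (congrArg _ (Fin.ext hval))
  · intro hA c hc
    obtain ⟨h0, hlast, hbij⟩ := hA
    match c with
    | none => rfl
    | some ⟨i, x⟩ =>
      exfalso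
      have hXm : 0 < X.m := by
        by_contra h
        have hX0 : X.m = 0 := by omega
        have hl0 : (Fin.last X.m : Fin (X.m + 1)) = 0 := by
          apply Fin.ext; simp [hX0]
        have hY : Y.m = 0 := by
          have := congrArg Fin.val hlast
          rw [hl0, h0] at this
          simpa using this.symm
        exact absurd i.isLt (by omega)
      have hmin : ∀ n : ℕ, min n X.m < X.m + 1 := fun n => by omega
      set f : ℕ → ℕ := fun n => (F.α ⟨min n X.m, hmin n⟩ : ℕ) with hf
      have hf0 : f 0 = 0 := by
        have : (⟨min 0 X.m, hmin 0⟩ : Fin (X.m + 1)) = 0 := by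
          apply Fin.ext; simp
        rw [hf]; simp only; rw [this, h0]; rfl
      have hfm : f X.m = Y.m := by
        have : (⟨min X.m X.m, hmin X.m⟩ : Fin (X.m + 1)) = Fin.last X.m := by
          apply Fin.ext; simp [Fin.last]
        rw [hf]; simp only; rw [this, hlast]; rfl
      obtain ⟨j, hj, h1, h2⟩ := exists_step f hf0 X.m ((i : ℕ) + 1) (by omega)
        (by rw [hfm]; exact i.isLt)
      set jF : Fin X.m := ⟨j, hj⟩ with hjF
      have ec : jF.castSucc = (⟨min j X.m, hmin j⟩ : Fin (X.m + 1)) := by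
        apply Fin.ext; simp [hjF]; omega
      have es : jF.succ = (⟨min (j + 1) X.m, hmin (j + 1)⟩ : Fin (X.m + 1)) := by
        apply Fin.ext; simp [hjF]; omega
      have h1' : F.α jF.castSucc < i.succ := by
        rw [Fin.lt_def, ec]
        simpa using h1
      have h2' : i.succ ≤ F.α jF.succ := by
        rw [Fin.le_def, es]
        simpa using h2
      obtain ⟨y, hy⟩ := (hbij jF.succ).2 (Y.t i.succ (F.α jF.succ) h2' x)
      exact (hbase i x).mp hc jF y ⟨⟨h1', h2'⟩, hy.symm⟩
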